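/- Let f, g : Ω → ℝ with f ≤ g, x interior to Ω, and suppose the Markov right derivative of F(t) = [f(t), g(t)] exists at x. Suppose there exist α, β, c, d : Ω → ℝ and μ > 0 such that: α·f + β·g = c + d on Ω ∩ (x, ∞); α, β, c are continuous on Ω ∩ (x, ∞); |α(t)| + |β(t)| ≤ μ and μ·|α(t) - β(t)| ≥ 1 for all t ∈ Ω; d(x) = 0 and the right derivative d'₊(x) = 0. Then the right derivatives f'₊(x) and g'₊(x) exist. -/

import Mathlib

open Set Filter Topology

theorem stmt7 (Ω : Set ℝ) (f g α β c d : ℝ → ℝ) (x μ : ℝ) (hx : x ∈ interior Ω)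
    (hfg : ∀ t ∈ Ω, f t ≤ g t) (hμ : 0 < μ)
    (hmin : ∃ L₁ : ℝ, Tendsto (fun t => min (f t - f x) (g t - g x) / (t - x))
      (𝓝[Ω ∩ Set.Ioi x] x) (𝓝 L₁))
    (hmax : ∃ L₂ : ℝ, Tendsto (fun t => max (f t - f x) (g t - g x) / (t - x))
      (𝓝[Ω ∩ Set.Ioi x] x) (𝓝 L₂))
    (heq : ∀ t ∈ Ω ∩ Set.Ioi x, α t * f t + β t * g t = c t + d t)
    (hα : ContinuousOn α (Ω ∩ Set.Ioi x)) (hβ : ContinuousOn β (Ω ∩ Set.Ioi x))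
    (hc : ContinuousOn c (Ω ∩ Set.Ioi x))
    (hμ1 : ∀ t ∈ Ω, |α t| + |β t| ≤ μ)
    (hμ2 : ∀ t ∈ Ω, 1 ≤ μ * |α t - β t|)
    (hdx : d x = 0)
    (hd' : Tendsto (fun t => (d t - d x) / (t - x)) (𝓝[Ω ∩ Set.Ioi x] x) (𝓝 0)) :
    (∃ L : ℝ, Tendsto (fun t => (f t - f x) / (t - x)) (𝓝[Ω ∩ Set.Ioi x] x) (𝓝 L)) ∧
    (∃ L : ℝ, Tendsto (fun t => (g t - g x) / (t - x)) (𝓝[Ω ∩ Set.Ioi x] x) (𝓝 L)) := by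
  obtain ⟨L₁, hmin⟩ := hmin
  obtain ⟨L₂, hmax⟩ := hmax
  rw [mem_interior_iff_mem_nhds, Metric.mem_nhds_iff] at hx
  obtain ⟨ε, hε, hball⟩ := hx
  rw [Real.ball_eq_Ioo] at hball
  have hsub : Ioo x (x + ε) ⊆ Ω ∩ Ioi x := fun t ht =>
    ⟨hball ⟨by linarith [ht.1], ht.2⟩, ht.1⟩
  have hfil : 𝓝[Ω ∩ Set.Ioi x] x = 𝓝[>] x := by
    apply nhdsWithin_eq_nhdsWithin' (s := Ioo (x - ε) (x + ε))
      (Ioo_mem_nhds (by linarith) (by linarith))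
    ext t
    simp only [mem_inter_iff, mem_Ioo, mem_Ioi]
    constructor
    · rintro ⟨⟨_, ht⟩, h1, h2⟩; exact ⟨ht, h1, h2⟩
    · rintro ⟨ht, h1, h2⟩; exact ⟨⟨hball ⟨h1, h2⟩, ht⟩, h1, h2⟩
  rw [hfil] at hmin hmax hd' ⊢
  set S : ℝ → ℝ := fun t => (f t - f x) / (t - x) with hSdef
  set T : ℝ → ℝ := fun t => (g t - g x) / (t - x) with hTdef
  have hmem : ∀ᶠ t in 𝓝[>] x, t ∈ Ioo x (x + ε) :=
    Ioo_mem_nhdsGT_of_mem ⟨le_refl x, by linarith⟩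
  have hgt : ∀ᶠ t in 𝓝[>] x, x < t := self_mem_nhdsWithin
  have hmin' : Tendsto (fun t => min (S t) (T t)) (𝓝[>] x) (𝓝 L₁) := by
    refine Tendsto.congr' ?_ hmin
    filter_upwards [hgt] with t ht
    exact (min_div_div_right (by linarith : (0:ℝ) ≤ t - x) _ _).symm
  have hmax' : Tendsto (fun t => max (S t) (T t)) (𝓝[>] x) (𝓝 L₂) := by
    refine Tendsto.congr' ?_ hmax
    filter_upwards [hgt] with t ht
    exact (max_div_div_right (by linarith : (0:ℝ) ≤ t - x) _ _).symm
  have hsum : Tendsto (fun t => S t + T t) (𝓝[>] x) (𝓝 (L₁ + L₂)) :=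
    (hmin'.add hmax').congr fun t => min_add_max _ _
  have habs : Tendsto (fun t => |S t - T t|) (𝓝[>] x) (𝓝 (L₂ - L₁)) :=
    (hmax'.sub hmin').congr fun t => by
      rw [max_comm, min_comm]; exact max_sub_min_eq_abs _ _
  suffices hST : ∃ M : ℝ, Tendsto (fun t => S t - T t) (𝓝[>] x) (𝓝 M) by
    obtain ⟨M, hM⟩ := hST
    constructor
    · refine ⟨(L₁ + L₂ + M) / 2, ?_⟩
      have h := (hsum.add hM).div_const 2
      refine h.congr fun t => ?_
      show (S t + T t + (S t - T t)) / 2 = S t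
      ring
    · refine ⟨(L₁ + L₂ - M) / 2, ?_⟩
      have h := (hsum.sub hM).div_const 2
      refine h.congr fun t => ?_
      show (S t + T t - (S t - T t)) / 2 = T t
      ring
  have hΔ0 : 0 ≤ L₂ - L₁ := ge_of_tendsto' habs fun t => abs_nonneg _
  rcases eq_or_lt_of_le hΔ0 with h0 | hΔ
  · exact ⟨0, (tendsto_zero_iff_abs_tendsto_zero _).2 (h0 ▸ habs)⟩
  set Δ := L₂ - L₁ with hΔdef
  have hsign : (∀ᶠ t in 𝓝[>] x, S t - T t ≤ 0) ∨ (∀ᶠ t in 𝓝[>] x, 0 ≤ S t - T t) := by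
    by_contra hcon
    push_neg at hcon
    obtain ⟨h1, h2⟩ := hcon
    set φ : ℝ → ℝ := fun t => (α t - β t) / 2 with hφdef
    set ψ : ℝ → ℝ := fun t => (α t + β t) / 2 with hψdef
    set E : ℝ → ℝ := fun t => d t / (t - x) - ψ t * (S t + T t - (L₁ + L₂)) with hEdef
    set H : ℝ → ℝ := fun t => (c t - α t * f x - β t * g x) / (t - x) - (L₁ + L₂) * ψ t
      with hHdef
    have hφ2 : ∀ t ∈ Ω, 1 ≤ 2 * μ * |φ t| := by
      intro t ht
      have h := hμ2 t ht
      have habs2 : |φ t| = |α t - β t| / 2 := by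
        rw [hφdef]; rw [abs_div]; norm_num
      rw [habs2]; linarith
    have hφpos : ∀ t ∈ Ω, 0 < |φ t| := by
      intro t ht
      nlinarith [hφ2 t ht, abs_nonneg (φ t)]
    have hφne : ∀ t ∈ Ioo x (x + ε), φ t ≠ 0 := fun t ht =>
      abs_pos.mp (hφpos t (hsub ht).1)
    have hE0 : Tendsto E (𝓝[>] x) (𝓝 0) := by
      have p1 : Tendsto (fun t => d t / (t - x)) (𝓝[>] x) (𝓝 0) :=
        hd'.congr fun t => by rw [hdx, sub_zero]
      have hu : Tendsto (fun t => S t + T t - (L₁ + L₂)) (𝓝[>] x) (𝓝 0) := by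
        simpa using hsum.sub_const (L₁ + L₂)
      have p2 : Tendsto (fun t => ψ t * (S t + T t - (L₁ + L₂))) (𝓝[>] x) (𝓝 0) := by
        apply squeeze_zero_norm' (a := fun t => (μ / 2) * |S t + T t - (L₁ + L₂)|)
        · filter_upwards [hmem] with t ht
          have htΩ : t ∈ Ω := (hsub ht).1
          have hψb : |ψ t| ≤ μ / 2 := by
            have hab : |ψ t| ≤ (|α t| + |β t|) / 2 := by
              rw [hψdef]
              calc |(α t + β t) / 2| = |α t + β t| / 2 := by rw [abs_div]; norm_num
                _ ≤ (|α t| + |β t|) / 2 := by linarith [abs_add_le (α t) (β t)]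
            linarith [hμ1 t htΩ]
          rw [Real.norm_eq_abs, abs_mul]
          exact mul_le_mul_of_nonneg_right hψb (abs_nonneg _)
        · simpa using (hu.abs.const_mul (μ / 2))
      simpa using p1.sub p2
    have hkey : ∀ t ∈ Ioo x (x + ε), φ t * (S t - T t) = H t + E t := by
      intro t ht
      have htΩ := hsub ht
      have hne : t - x ≠ 0 := sub_ne_zero.2 (ne_of_gt ht.1)
      have he := heq t htΩ
      have hc' : c t = α t * f t + β t * g t - d t := by linarith [he]
      simp only [hφdef, hψdef, hEdef, hHdef, hSdef, hTdef]
      rw [hc']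
      field_simp
      ring
    have hHcont : ContinuousOn H (Ioo x (x + ε)) := by
      have hne : ∀ t ∈ Ioo x (x + ε), t - x ≠ 0 := fun t ht =>
        sub_ne_zero.2 (ne_of_gt ht.1)
      have hcc : ContinuousOn (fun t => c t - α t * f x - β t * g x) (Ioo x (x + ε)) :=
        ((hc.mono hsub).sub ((hα.mono hsub).mul continuousOn_const)).sub
          ((hβ.mono hsub).mul continuousOn_const)
      have hid : ContinuousOn (fun t : ℝ => t - x) (Ioo x (x + ε)) :=
        (continuous_id.sub continuous_const).continuousOn
      have hψc : ContinuousOn ψ (Ioo x (x + ε)) :=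
        ((hα.mono hsub).add (hβ.mono hsub)).div_const 2
      exact (hcc.div hid hne).sub (continuousOn_const.mul hψc)
    have hφcont : ContinuousOn φ (Ioo x (x + ε)) :=
      ((hα.mono hsub).sub (hβ.mono hsub)).div_const 2
    set K : ℝ → ℝ := fun t => H t / φ t with hKdef
    have hKcont : ContinuousOn K (Ioo x (x + ε)) := hHcont.div hφcont hφne
    have hK : ∀ t ∈ Ioo x (x + ε), K t = (S t - T t) - E t / φ t := by
      intro t ht
      have hne := hφne t ht
      have hk := hkey t ht
      rw [hKdef]
      field_simp
      linarith [hk]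
    have hEφ : ∀ t, t ∈ Ioo x (x + ε) → |E t| ≤ Δ / (8 * μ) → |E t / φ t| ≤ Δ / 4 := by
      intro t htε hEb
      have htΩ : t ∈ Ω := (hsub htε).1
      have h2μ := hφ2 t htΩ
      have hpos := hφpos t htΩ
      rw [abs_div, div_le_iff₀ hpos]
      have hmm : |E t| * 1 ≤ (Δ / (8 * μ)) * (2 * μ * |φ t|) :=
        mul_le_mul hEb h2μ zero_le_one (by positivity)
      have h8 : (Δ / (8 * μ)) * (2 * μ * |φ t|) = Δ / 4 * |φ t| := by
        field_simp; ring
      rw [h8] at hmm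
      linarith
    have hb1 : ∀ᶠ t in 𝓝[>] x, Δ / 2 ≤ |S t - T t| :=
      habs.eventually_const_le (by linarith)
    have hb2 : ∀ᶠ t in 𝓝[>] x, |E t| ≤ Δ / (8 * μ) := by
      have hr : (0:ℝ) < Δ / (8 * μ) := by positivity
      have hEabs : Tendsto (fun t => |E t|) (𝓝[>] x) (𝓝 0) := by
        simpa using hE0.abs
      exact hEabs.eventually (eventually_le_nhds hr)
    have hev : ∀ᶠ t in 𝓝[>] x,
        t ∈ Ioo x (x + ε) ∧ Δ / 2 ≤ |S t - T t| ∧ |E t| ≤ Δ / (8 * μ) := by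
      filter_upwards [hmem, hb1, hb2] with t p1 p2 p3
      exact ⟨p1, p2, p3⟩
    obtain ⟨u, hu, huse⟩ := mem_nhdsGT_iff_exists_Ioo_subset.mp hev
    have hIoo_mem : Ioo x u ∈ 𝓝[>] x := Ioo_mem_nhdsGT_of_mem ⟨le_refl x, hu⟩
    obtain ⟨b, hbpos, hbI⟩ := (h1.and_eventually hIoo_mem).exists
    obtain ⟨a, haneg, haI⟩ := (h2.and_eventually hIoo_mem).exists
    obtain ⟨haε, haabs, haE⟩ := huse haI
    obtain ⟨hbε, hbabs, hbE⟩ := huse hbI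
    have hKa : K a < 0 := by
      have hk := hK a haε
      have hsa : S a - T a ≤ -(Δ / 2) := by
        rw [abs_of_neg haneg] at haabs; linarith
      have hEa := abs_le.mp (hEφ a haε haE)
      rw [hk]; linarith
    have hKb : 0 < K b := by
      have hk := hK b hbε
      have hsb : Δ / 2 ≤ S b - T b := by
        rw [abs_of_pos hbpos] at hbabs; linarith
      have hEb := abs_le.mp (hEφ b hbε hbE)
      rw [hk]; linarith
    have huIcc : uIcc a b ⊆ Ioo x u := by
      intro t ht
      rw [Set.mem_uIcc] at ht
      rcases ht with ⟨hta, htb⟩ | ⟨htb, hta⟩ <;>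
        exact ⟨by linarith [haI.1, hbI.1], by linarith [haI.2, hbI.2]⟩
    have hsubε : Ioo x u ⊆ Ioo x (x + ε) := fun t ht => (huse ht).1
    have h0mem : (0:ℝ) ∈ uIcc (K a) (K b) := by
      rw [Set.mem_uIcc]
      exact Or.inl ⟨hKa.le, hKb.le⟩
    obtain ⟨t₀, ht₀mem, ht₀⟩ :=
      intermediate_value_uIcc (hKcont.mono (huIcc.trans hsubε)) h0mem
    obtain ⟨ht₀ε, ht₀abs, ht₀E⟩ := huse (huIcc ht₀mem)
    have hk := hK t₀ ht₀ε
    rw [ht₀] at hk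
    have heqst : S t₀ - T t₀ = E t₀ / φ t₀ := by linarith
    have habseq : |S t₀ - T t₀| ≤ Δ / 4 := heqst ▸ hEφ t₀ ht₀ε ht₀E
    linarith
  rcases hsign with hneg | hpos
  · refine ⟨-(L₂ - L₁), Tendsto.congr' ?_ habs.neg⟩
    filter_upwards [hneg] with t ht
    rw [abs_of_nonpos ht]; ring
  · refine ⟨L₂ - L₁, Tendsto.congr' ?_ habs⟩
    filter_upwards [hpos] with t ht
    rw [abs_of_nonneg ht]
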